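/- Let T > 0, K ≥ 0, β ∈ ℝ, ε₁ > 0, C₁ ≥ 0 and θ ∈ [0,1), with β > ε₁. Let y : [0, T+K] → [0,∞) be continuous and z : [0, T+K] → [0,∞) be integrable, with y(t) = 0 for all t ∈ [T, T+K] and z(t) = 0 for almost every t ∈ [T, T+K]. Suppose that for every t ∈ [0,T], e^{βt} y(t) + β ∫_t^T e^{βs} y(s) ds + ∫_t^T e^{βs} z(s) ds ≤ (ε₁ + C₁) ∫_t^{T+K} e^{βs} y(s) ds + θ ∫_t^{T+K} e^{βs} z(s) ds. Then y(t) = 0 for all t ∈ [0, T+K] and z(t) = 0 for almost every t ∈ [0, T+K]. -/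

import Mathlib

open MeasureTheory Set

/-- Deterministic skeleton of the uniqueness argument for the reflected anticipated
BDSDE: if nonnegative `y` (continuous) and `z` (integrable) vanish on `[T, T+K]` and
satisfy the a priori inequality
`e^{βt} y t + β ∫_t^T e^{βs} y + ∫_t^T e^{βs} z
  ≤ (ε₁ + C₁) ∫_t^{T+K} e^{βs} y + θ ∫_t^{T+K} e^{βs} z`
for every `t ∈ [0, T]`, with `θ < 1` and `β > ε₁`, then `y ≡ 0` on `[0, T+K]`
and `z = 0` a.e. on `[0, T+K]`. -/
theorem uniqueness_skeleton (T K β ε₁ C₁ θ : ℝ)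
    (hT : 0 < T) (hK : 0 ≤ K) (hε₁ : 0 < ε₁) (hC₁ : 0 ≤ C₁)
    (hθ0 : 0 ≤ θ) (hθ1 : θ < 1) (hβ : ε₁ < β)
    (y z : ℝ → ℝ)
    (hy_cont : ContinuousOn y (Set.Icc 0 (T + K)))
    (hy_nonneg : ∀ t ∈ Set.Icc (0:ℝ) (T + K), 0 ≤ y t)
    (hz_int : IntegrableOn z (Set.Icc 0 (T + K)))
    (hz_nonneg : ∀ t ∈ Set.Icc (0:ℝ) (T + K), 0 ≤ z t)
    (hy_zero : ∀ t ∈ Set.Icc T (T + K), y t = 0)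
    (hz_zero : ∀ᵐ t ∂(volume.restrict (Set.Icc T (T + K))), z t = 0)
    (h : ∀ t ∈ Set.Icc (0:ℝ) T,
      Real.exp (β * t) * y t + β * (∫ s in t..T, Real.exp (β * s) * y s)
          + ∫ s in t..T, Real.exp (β * s) * z s
        ≤ (ε₁ + C₁) * (∫ s in t..(T + K), Real.exp (β * s) * y s)
          + θ * ∫ s in t..(T + K), Real.exp (β * s) * z s) :
    (∀ t ∈ Set.Icc (0:ℝ) (T + K), y t = 0) ∧
      (∀ᵐ t ∂(volume.restrict (Set.Icc (0:ℝ) (T + K))), z t = 0) := by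
  have hTK : T ≤ T + K := le_add_of_nonneg_right hK
  have hT0K : (0:ℝ) ≤ T + K := le_trans hT.le hTK
  set f : ℝ → ℝ := fun s => Real.exp (β * s) * y s with hf_def
  set g : ℝ → ℝ := fun s => Real.exp (β * s) * z s with hg_def
  have hβ0 : (0:ℝ) < β := lt_trans hε₁ hβ
  have hf_cont : ContinuousOn f (Icc 0 (T + K)) :=
    ((Real.continuous_exp.comp (continuous_const.mul continuous_id)).continuousOn).mul hy_cont
  have hf_nonneg : ∀ s ∈ Icc (0:ℝ) (T + K), 0 ≤ f s :=
    fun s hs => mul_nonneg (Real.exp_pos _).le (hy_nonneg s hs)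
  have hg_nonneg : ∀ s ∈ Icc (0:ℝ) (T + K), 0 ≤ g s :=
    fun s hs => mul_nonneg (Real.exp_pos _).le (hz_nonneg s hs)
  -- interval integrability of f on subintervals
  have hf_ii : ∀ a b : ℝ, a ∈ Icc (0:ℝ) (T + K) → b ∈ Icc (0:ℝ) (T + K) →
      IntervalIntegrable f volume a b := by
    intro a b ha hb
    apply (hf_cont.mono ?_).intervalIntegrable
    exact (uIcc_subset_Icc ha hb)
  -- integrability of g
  have hg_int : IntegrableOn g (Icc 0 (T + K)) := by
    apply hz_int.bdd_mul (c := Real.exp (β * (T + K)))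
    · exact ((Real.continuous_exp.comp
        (continuous_const.mul continuous_id)).aestronglyMeasurable)
    · refine (ae_restrict_iff' measurableSet_Icc).mpr (ae_of_all _ fun x hx => ?_)
      rw [Real.norm_eq_abs, abs_of_pos (Real.exp_pos _)]
      exact Real.exp_le_exp.mpr (mul_le_mul_of_nonneg_left hx.2 hβ0.le)
  have hg_ii : ∀ a b : ℝ, a ∈ Icc (0:ℝ) (T + K) → b ∈ Icc (0:ℝ) (T + K) →
      IntervalIntegrable g volume a b := by
    intro a b ha hb
    rw [intervalIntegrable_iff]
    exact hg_int.mono_set (uIoc_subset_uIcc.trans (uIcc_subset_Icc ha hb))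
  -- tail integrals vanish
  have hf_tail : (∫ s in T..(T + K), f s) = 0 := by
    rw [show (0:ℝ) = ∫ s in T..(T+K), (0:ℝ) by simp]
    apply intervalIntegral.integral_congr
    intro s hs
    rw [uIcc_of_le hTK] at hs
    simp [hf_def, hy_zero s hs]
  have hg_tail : (∫ s in T..(T + K), g s) = 0 := by
    rw [intervalIntegral.integral_of_le hTK]
    have hz0 : z =ᵐ[volume.restrict (Ioc T (T + K))] 0 :=
      ae_restrict_of_ae_restrict_of_subset Ioc_subset_Icc_self hz_zero
    have : g =ᵐ[volume.restrict (Ioc T (T + K))] 0 := by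
      filter_upwards [hz0] with x hx
      simp [hg_def, hx]
    rw [integral_congr_ae this]
    simp
  -- split integrals and derive the key pointwise bound
  set c : ℝ := ε₁ + C₁ with hc_def
  have hc0 : 0 < c := by positivity
  set F : ℝ → ℝ := fun t => ∫ s in t..T, f s with hF_def
  have hF_nonneg : ∀ t ∈ Icc (0:ℝ) T, 0 ≤ F t := by
    intro t ht
    apply intervalIntegral.integral_nonneg ht.2
    intro u hu
    exact hf_nonneg u ⟨le_trans ht.1 hu.1, le_trans hu.2 hTK⟩
  have hmem : ∀ t ∈ Icc (0:ℝ) T, t ∈ Icc (0:ℝ) (T + K) :=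
    fun t ht => ⟨ht.1, le_trans ht.2 hTK⟩
  have hTmem : T ∈ Icc (0:ℝ) (T + K) := ⟨hT.le, hTK⟩
  have hTKmem : T + K ∈ Icc (0:ℝ) (T + K) := ⟨hT0K, le_refl _⟩
  have key : ∀ t ∈ Icc (0:ℝ) T,
      f t + (1 - θ) * (∫ s in t..T, g s) ≤ c * F t := by
    intro t ht
    have ht' := hmem t ht
    have hsplitf : (∫ s in t..(T + K), f s) = F t := by
      rw [← intervalIntegral.integral_add_adjacent_intervals
        (hf_ii t T ht' hTmem) (hf_ii T (T + K) hTmem hTKmem), hf_tail, add_zero]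
    have hsplitg : (∫ s in t..(T + K), g s) = ∫ s in t..T, g s := by
      rw [← intervalIntegral.integral_add_adjacent_intervals
        (hg_ii t T ht' hTmem) (hg_ii T (T + K) hTmem hTKmem), hg_tail, add_zero]
    have hh := h t ht
    rw [hsplitf, hsplitg] at hh
    have hβF : 0 ≤ β * F t := mul_nonneg hβ0.le (hF_nonneg t ht)
    have hh' : f t + β * F t + (∫ s in t..T, g s)
        ≤ c * F t + θ * (∫ s in t..T, g s) := hh
    linarith [hh', hβF]
  have hfleF : ∀ t ∈ Icc (0:ℝ) T, f t ≤ c * F t := by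
    intro t ht
    have hInt : 0 ≤ ∫ s in t..T, g s := by
      apply intervalIntegral.integral_nonneg ht.2
      intro u hu
      exact hg_nonneg u ⟨le_trans ht.1 hu.1, le_trans hu.2 hTK⟩
    nlinarith [key t ht]
  -- Gronwall: F ≡ 0 on [0, T]
  have hF_cont : ContinuousOn F (Icc 0 T) := by
    have h1 : ContinuousOn (fun x => ∫ s in Icc (0:ℝ) x, f s) (Icc 0 (T + K)) :=
      intervalIntegral.continuousOn_primitive_Icc (hf_cont.integrableOn_compact isCompact_Icc)
    have h2 : ContinuousOn (fun x => ∫ s in (0:ℝ)..x, f s) (Icc 0 T) := by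
      apply (h1.mono (Icc_subset_Icc le_rfl hTK)).congr
      intro x hx
      show (∫ s in (0:ℝ)..x, f s) = ∫ s in Icc (0:ℝ) x, f s
      rw [intervalIntegral.integral_of_le hx.1, ← integral_Icc_eq_integral_Ioc]
    have h3 : ∀ x ∈ Icc (0:ℝ) T,
        F x = (∫ s in (0:ℝ)..T, f s) - ∫ s in (0:ℝ)..x, f s := by
      intro x hx
      have := intervalIntegral.integral_add_adjacent_intervals
        (hf_ii 0 x ⟨le_rfl, hT0K⟩ (hmem x hx)) (hf_ii x T (hmem x hx) hTmem)
      rw [← this]; ring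
    exact (continuousOn_const.sub h2).congr h3
  have hF_deriv : ∀ t ∈ Ioo (0:ℝ) T, HasDerivAt F (-f t) t := by
    intro t ht
    have htK : t < T + K := lt_of_lt_of_le ht.2 hTK
    have hnb : Ioo (0:ℝ) (T + K) ∈ nhds t := Ioo_mem_nhds ht.1 htK
    apply intervalIntegral.integral_hasDerivAt_left
      (hf_ii t T (hmem t ⟨ht.1.le, ht.2.le⟩) hTmem)
    · exact ⟨Ioo 0 (T + K), hnb,
        ((hf_cont.mono Ioo_subset_Icc_self).aestronglyMeasurable measurableSet_Ioo)⟩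
    · exact (hf_cont.mono Ioo_subset_Icc_self).continuousAt hnb
  set G : ℝ → ℝ := fun t => Real.exp (c * t) * F t with hG_def
  have hG_deriv : ∀ t ∈ Ioo (0:ℝ) T,
      HasDerivAt G (Real.exp (c * t) * (c * F t - f t)) t := by
    intro t ht
    have h1 : HasDerivAt (fun u => Real.exp (c * u)) (Real.exp (c * t) * (c * 1)) t :=
      (HasDerivAt.const_mul c (hasDerivAt_id t)).exp
    have := h1.mul (hF_deriv t ht)
    convert this using 1
    · rfl
    · rfl
    · rfl
    · ring
  have hG_mono : MonotoneOn G (Icc 0 T) := by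
    apply monotoneOn_of_deriv_nonneg (convex_Icc 0 T)
    · exact ((Real.continuous_exp.comp (continuous_const.mul continuous_id)).continuousOn).mul
        hF_cont
    · intro t ht
      rw [interior_Icc] at ht
      exact ((hG_deriv t ht).differentiableAt).differentiableWithinAt
    · intro t ht
      rw [interior_Icc] at ht
      rw [(hG_deriv t ht).deriv]
      have hle := hfleF t ⟨ht.1.le, ht.2.le⟩
      have : 0 ≤ c * F t - f t := by linarith
      positivity
  have hF_zero : ∀ t ∈ Icc (0:ℝ) T, F t = 0 := by
    intro t ht
    have hGT : G T = 0 := by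
      simp [hG_def, hF_def, intervalIntegral.integral_same]
    have := hG_mono ht (right_mem_Icc.mpr hT.le) ht.2
    rw [hGT] at this
    have hFt := hF_nonneg t ht
    have hexp := Real.exp_pos (c * t)
    have hGt : Real.exp (c * t) * F t ≤ 0 := this
    nlinarith [hGt, hFt, hexp]
  have hy0 : ∀ t ∈ Icc (0:ℝ) T, y t = 0 := by
    intro t ht
    have h1 := hfleF t ht
    rw [hF_zero t ht, mul_zero] at h1
    have h2 : 0 ≤ f t := hf_nonneg t (hmem t ht)
    have h3 : f t = 0 := le_antisymm h1 h2
    have hexp := Real.exp_pos (β * t)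
    have := mul_eq_zero.mp h3
    rcases this with h4 | h4
    · exact absurd h4 (ne_of_gt hexp)
    · exact h4
  constructor
  · intro t ht
    rcases le_total t T with h1 | h1
    · exact hy0 t ⟨ht.1, h1⟩
    · exact hy_zero t ⟨h1, ht.2⟩
  · -- the z part
    have hI0 : (∫ s in (0:ℝ)..T, g s) = 0 := by
      have hk := key 0 (left_mem_Icc.mpr hT.le)
      have hF0 : F 0 = 0 := hF_zero 0 (left_mem_Icc.mpr hT.le)
      have hf0 : 0 ≤ f 0 := hf_nonneg 0 ⟨le_rfl, hT0K⟩
      have hInt : 0 ≤ ∫ s in (0:ℝ)..T, g s := by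
        apply intervalIntegral.integral_nonneg hT.le
        intro u hu
        exact hg_nonneg u ⟨hu.1, le_trans hu.2 hTK⟩
      rw [hF0, mul_zero] at hk
      refine le_antisymm ?_ hInt
      nlinarith [hk, hf0]
    have hg_ae : g =ᵐ[volume.restrict (Ioc (0:ℝ) T)] 0 := by
      rw [← intervalIntegral.integral_eq_zero_iff_of_le_of_nonneg_ae hT.le ?_ ?_]
      · exact hI0
      · refine (ae_restrict_iff' measurableSet_Ioc).mpr (ae_of_all _ fun x hx => ?_)
        exact hg_nonneg x ⟨hx.1.le, le_trans hx.2 hTK⟩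
      · exact hg_ii 0 T ⟨le_rfl, hT0K⟩ hTmem
    have hz_ae1 : ∀ᵐ t ∂volume, t ∈ Ioc (0:ℝ) T → z t = 0 := by
      rw [← ae_restrict_iff' measurableSet_Ioc]
      filter_upwards [hg_ae] with x hx
      have : Real.exp (β * x) * z x = 0 := hx
      rcases mul_eq_zero.mp this with h4 | h4
      · exact absurd h4 (ne_of_gt (Real.exp_pos _))
      · exact h4
    have hz_ae2 : ∀ᵐ t ∂volume, t ∈ Icc T (T + K) → z t = 0 :=
      (ae_restrict_iff' measurableSet_Icc).mp hz_zero
    have hz_ne0 : ∀ᵐ t : ℝ ∂volume, t ≠ 0 := by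
      have : volume ({(0:ℝ)} : Set ℝ) = 0 := measure_singleton 0
      rw [ae_iff]
      simpa using this
    rw [ae_restrict_iff' measurableSet_Icc]
    filter_upwards [hz_ae1, hz_ae2, hz_ne0] with t h1 h2 h3 ht
    rcases le_total t T with h4 | h4
    · exact h1 ⟨lt_of_le_of_ne ht.1 (Ne.symm h3), h4⟩
    · exact h2 ⟨h4, ht.2⟩
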